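/- Let K be a field of characteristic zero, let n ≥ 2, and let L be a LAnKe over K. For all x_1,…,x_n, z_1,…,z_{n-1}, w_1,…,w_{n-1} ∈ L, setting z_0 = [x_1,…,x_n], one has (n−2)·[[z_0,z_1,…,z_{n-1}],w_1,…,w_{n-1}] + [[z_0,w_1,…,w_{n-1}],z_1,…,z_{n-1}] + Σ_{i=1}^{n-1} (−1)^i Σ_{j=1}^{n-1} (−1)^{j+1} [[z_0,w_j,z_1,…,ẑ_i,…,z_{n-1}],z_i,w_1,…,ŵ_j,…,w_{n-1}] = 0, where the integer coefficient n−2 acts via the canonical map ℤ → K. -/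

import Mathlib

/-- The tuple `(a, v₀, …, v_{n-2})` of length `n`: one element `a` prepended to the
length-`(n-1)` tuple `v`. -/
def consTup {L : Type*} {n : ℕ} (a : L) (v : Fin (n - 1) → L) : Fin n → L :=
  fun m =>
    if h0 : (m : ℕ) = 0 then a
    else v ⟨(m : ℕ) - 1, by have := m.isLt; omega⟩

/-- The tuple `(a, b, v₀, …, v̂ᵢ, …, v_{n-2})` of length `n`: two elements `a, b` followed
by the length-`(n-1)` tuple `v` with its `i`-th entry omitted. -/
def pairCons {L : Type*} {n : ℕ} (a b : L) (v : Fin (n - 1) → L) (i : Fin (n - 1)) :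
    Fin n → L :=
  fun m =>
    if h0 : (m : ℕ) = 0 then a
    else if h1 : (m : ℕ) = 1 then b
    else if (m : ℕ) - 2 < (i : ℕ) then
      v ⟨(m : ℕ) - 2, by have := m.isLt; have := i.isLt; omega⟩
    else v ⟨(m : ℕ) - 1, by have := m.isLt; omega⟩

/-- A LAnKe (Lie algebra of the `n`-th kind, or Filippov algebra) over a field `K`:
a vector space `L` with an `n`-linear bracket which is skew-symmetric and satisfies the
generalized Jacobi identity. -/
structure LAnKe (K : Type*) [Field K] (n : ℕ) (L : Type*)
    [AddCommGroup L] [Module K L] where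
  bracket : MultilinearMap K (fun _ : Fin n => L) L
  /-- `[x_1, …, x_n] = sign σ • [x_{σ(1)}, …, x_{σ(n)}]` for every permutation `σ`. -/
  skew : ∀ (x : Fin n → L) (σ : Equiv.Perm (Fin n)),
    bracket x = (Equiv.Perm.sign σ : ℤ) • bracket (x ∘ σ)
  /-- The generalized Jacobi identity:
  `[[x_1,…,x_n], y_1,…,y_{n-1}] = Σ_{i=1}^n [x_1,…,[x_i,y_1,…,y_{n-1}],…,x_n]`. -/
  jacobi : ∀ (x : Fin n → L) (y : Fin (n - 1) → L),
    bracket (consTup (bracket x) y) =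
      ∑ i : Fin n, bracket (Function.update x i (bracket (consTup (x i) y)))

section Aux

variable {L : Type*} {q : ℕ}

/-- remove the `i`-th entry of a tuple of length `q+1`. -/
def rmAt (v : Fin (q + 1) → L) (i : Fin (q + 1)) : Fin q → L :=
  fun k => if (k : ℕ) < (i : ℕ) then v ⟨k, by omega⟩ else v ⟨(k : ℕ) + 1, by omega⟩

lemma consTup_zero (a : L) (v : Fin q → L) : consTup (n := q + 1) a v 0 = a := by
  simp [consTup]

lemma consTup_succ (a : L) (v : Fin q → L) (k : Fin q) :
    consTup (n := q + 1) a v k.succ = v k := by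
  simp [consTup]

lemma update_consTup_zero (a c : L) (v : Fin q → L) :
    Function.update (consTup (n := q + 1) a v) 0 c = consTup c v := by
  funext m
  rcases m with ⟨mv, hm⟩
  rcases Nat.eq_zero_or_pos mv with h | h
  · subst h; simp [Function.update, consTup]
  · have : (⟨mv, hm⟩ : Fin (q + 1)) ≠ 0 := by simp [Fin.ext_iff]; omega
    rw [Function.update_of_ne this]
    simp only [consTup]
    split_ifs with h0
    · exfalso; omega
    · rfl

lemma update_consTup_succ (a c : L) (v : Fin q → L) (j : Fin q) :
    Function.update (consTup (n := q + 1) a v) j.succ c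
      = consTup (n := q + 1) a (Function.update v j c) := by
  funext m
  rcases m with ⟨mv, hm⟩
  by_cases h : mv = (j : ℕ) + 1
  · have : (⟨mv, hm⟩ : Fin (q + 1)) = j.succ := by simp [Fin.ext_iff, h]
    rw [this, Function.update_self, consTup_succ, Function.update_self]
  · have hne : (⟨mv, hm⟩ : Fin (q + 1)) ≠ j.succ := by simp [Fin.ext_iff]; omega
    rw [Function.update_of_ne hne]
    simp only [consTup]
    split_ifs with h0
    · rfl
    · rw [Function.update_of_ne (by simp [Fin.ext_iff]; omega)]

lemma pairCons_eq (a b : L) (v : Fin (q + 1) → L) (i : Fin (q + 1)) :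
    pairCons (n := q + 2) a b v i = consTup a (consTup (n := q + 1) b (rmAt v i)) := by
  funext m
  rcases m with ⟨mv, hm⟩
  simp only [pairCons, consTup, rmAt]
  split_ifs <;> first
    | rfl
    | omega
    | (congr 1; simp [Fin.ext_iff]; omega)

end Aux

section Brk

variable {K : Type*} [Field K] {L : Type*} [AddCommGroup L] [Module K L] {m : ℕ}

lemma brk_smul (alg : LAnKe K (m + 2) L) (a : ℤ) (x : L) (v : Fin (m + 1) → L) :
    alg.bracket (consTup (a • x) v) = a • alg.bracket (consTup x v) := by
  have h : ∀ c : L, consTup (n := m + 2) c v = Function.update (consTup x v) 0 c :=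
    fun c => (update_consTup_zero x c v).symm
  rw [h (a • x), show a • x = ((a : K)) • x from (Int.cast_smul_eq_zsmul K a x).symm,
    alg.bracket.map_update_smul _ 0 _ x, Int.cast_smul_eq_zsmul,
    update_consTup_zero x x v]

lemma moveFront (alg : LAnKe K (m + 2) L) (s : Fin (m + 2) → L) (p : Fin (m + 2)) :
    alg.bracket s = (-1 : ℤ) ^ (p : ℕ) •
      alg.bracket (consTup (s p) (fun k : Fin (m + 1) =>
        if (k : ℕ) < (p : ℕ) then s ⟨k, by omega⟩ else s ⟨(k : ℕ) + 1, by omega⟩)) := by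
  set f : Fin (m + 1) → L := fun k : Fin (m + 1) =>
    if (k : ℕ) < (p : ℕ) then s ⟨k, by omega⟩ else s ⟨(k : ℕ) + 1, by omega⟩ with hf
  have hs := alg.skew (consTup (s p) f) (Fin.cycleRange p)
  have hc : (consTup (s p) f) ∘ (Fin.cycleRange p) = s := by
    funext j
    rcases lt_trichotomy j p with h | h | h
    · have h1 : Fin.cycleRange p j = j + 1 := Fin.cycleRange_of_lt h
      have h2 : ((j + 1 : Fin (m + 2)) : ℕ) = (j : ℕ) + 1 := by
        rw [Fin.val_add_one_of_lt]; exact lt_of_lt_of_le h p.le_last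
      simp only [Function.comp_apply, h1, consTup, h2]
      rw [dif_neg (by omega)]
      have : f ⟨(j : ℕ) + 1 - 1, by omega⟩ = s j := by
        simp only [hf]
        rw [if_pos (by simpa using h)]
        exact congrArg s (Fin.ext (by simp))
      exact this
    · subst h
      simp [Fin.cycleRange_self, consTup]
    · have h1 : Fin.cycleRange p j = j := Fin.cycleRange_of_gt h
      have hj1 : 1 ≤ (j : ℕ) := by
        have : (p : ℕ) < (j : ℕ) := h
        omega
      simp only [Function.comp_apply, h1, consTup]
      rw [dif_neg (by omega)]
      have : f ⟨(j : ℕ) - 1, by omega⟩ = s j := by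
        simp only [hf]
        rw [if_neg (by simp; omega)]
        congr 1
        simp [Fin.ext_iff]
        omega
      exact this
  rw [hc, Fin.sign_cycleRange] at hs
  rw [Units.val_pow_eq_pow_val, Units.val_neg, Units.val_one] at hs
  rw [hs, smul_smul, ← pow_add, Even.neg_one_pow ⟨(p : ℕ), rfl⟩, one_smul]

lemma brk_swap (alg : LAnKe K (m + 2) L) (a b : L) (v : Fin m → L) :
    alg.bracket (consTup a (consTup (n := m + 1) b v))
      = - alg.bracket (consTup b (consTup (n := m + 1) a v)) := by
  have hs := alg.skew (consTup (n := m + 2) b (consTup (n := m + 1) a v)) (Equiv.swap 0 1)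
  have hsign : Equiv.Perm.sign (Equiv.swap (0 : Fin (m + 2)) 1) = -1 :=
    Equiv.Perm.sign_swap (by simp [Fin.ext_iff])
  have hc : (consTup (n := m + 2) b (consTup (n := m + 1) a v)) ∘ (Equiv.swap 0 1)
      = consTup (n := m + 2) a (consTup (n := m + 1) b v) := by
    funext j
    rcases j with ⟨jv, hj⟩
    match jv with
    | 0 =>
      have e : (⟨0, hj⟩ : Fin (m + 2)) = 0 := rfl
      simp [e, Equiv.swap_apply_left, consTup, Fin.val_one]
    | 1 =>
      have e : (⟨1, hj⟩ : Fin (m + 2)) = 1 := rfl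
      simp [e, Equiv.swap_apply_right, consTup, Fin.val_one]
    | (jv + 2) =>
      have h0 : (⟨jv + 2, hj⟩ : Fin (m + 2)) ≠ 0 := by simp [Fin.ext_iff]
      have h1 : (⟨jv + 2, hj⟩ : Fin (m + 2)) ≠ 1 := by simp [Fin.ext_iff]
      simp only [Function.comp_apply, Equiv.swap_apply_of_ne_of_ne h0 h1]
      simp [consTup]
  rw [hc, hsign] at hs
  rw [hs]
  simp

end Brk

section Main

variable {K : Type*} [Field K] {L : Type*} [AddCommGroup L] [Module K L] {m : ℕ}

lemma rmAt_update (v : Fin (m + 1) → L) (i : Fin (m + 1)) (d : L) :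
    rmAt (Function.update v i d) i = rmAt v i := by
  funext k
  simp only [rmAt]
  split_ifs with hk
  · rw [Function.update_of_ne (by simp [Fin.ext_iff]; omega)]
  · rw [Function.update_of_ne (by simp [Fin.ext_iff]; omega)]

lemma moveFront_cons (alg : LAnKe K (m + 2) L) (a : L) (v : Fin (m + 1) → L)
    (i : Fin (m + 1)) :
    alg.bracket (consTup (n := m + 2) a v)
      = (-1 : ℤ) ^ ((i : ℕ) + 1) •
        alg.bracket (consTup (v i) (consTup (n := m + 1) a (rmAt v i))) := by
  have h := moveFront alg (consTup (n := m + 2) a v) i.succ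
  rw [h]
  congr 2
  refine congrArg₂ consTup (consTup_succ a v i) ?_
  funext k
  simp only [consTup, rmAt, Fin.val_succ]
  split_ifs <;> first
    | rfl
    | omega
    | (congr 1; simp only [Fin.ext_iff, Fin.val_mk]; try omega)
    | (exfalso; simp_all only [Fin.val_mk]; try omega)

end Main

/-- in a LAnKe, with `z_0 = [x_1,…,x_n]`,
`(n-2)·[[z_0,z_1,…,z_{n-1}], w_1,…,w_{n-1}] + [[z_0,w_1,…,w_{n-1}], z_1,…,z_{n-1}]
   + Σ_{i=1}^{n-1} (-1)^i Σ_{j=1}^{n-1} (-1)^{j+1}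
       [[z_0,w_j,z_1,…,ẑ_i,…,z_{n-1}], z_i, w_1,…,ŵ_j,…,w_{n-1}] = 0`,
where `n-2` acts via the canonical map `ℤ → K`. Here `z i : L` for `i : Fin (n-1)` is
the paper's `z_{i+1}` (so the paper's sign `(-1)^i` is `(-1)^{(i:ℕ)+1}`), likewise for `w`. -/
theorem lanke_relation
    (K : Type*) [Field K] [CharZero K] (n : ℕ) (hn : 2 ≤ n)
    (L : Type*) [AddCommGroup L] [Module K L] (alg : LAnKe K n L)
    (x : Fin n → L) (z0 : L) (hz0 : z0 = alg.bracket x)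
    (z w : Fin (n - 1) → L) :
    (((n : ℤ) - 2 : ℤ) : K) •
        alg.bracket (consTup (alg.bracket (consTup z0 z)) w) +
      alg.bracket (consTup (alg.bracket (consTup z0 w)) z) +
      ∑ i : Fin (n - 1), ∑ j : Fin (n - 1),
        ((-1 : ℤ) ^ ((i : ℕ) + 1) * (-1 : ℤ) ^ (((j : ℕ) + 1) + 1)) •
          alg.bracket
            (pairCons (alg.bracket (pairCons z0 (w j) z i)) (z i) w j) = 0 := by
  obtain ⟨m, rfl⟩ : ∃ m, n = m + 2 := ⟨n - 2, by omega⟩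
  suffices h : ∀ (z w : Fin (m + 1) → L),
      ((((m + 2 : ℕ) : ℤ) - 2 : ℤ) : K) •
          alg.bracket (consTup (alg.bracket (consTup z0 z)) w) +
        alg.bracket (consTup (alg.bracket (consTup z0 w)) z) +
        ∑ i : Fin (m + 1), ∑ j : Fin (m + 1),
          ((-1 : ℤ) ^ ((i : ℕ) + 1) * (-1 : ℤ) ^ (((j : ℕ) + 1) + 1)) •
            alg.bracket
              (pairCons (alg.bracket (pairCons z0 (w j) z i)) (z i) w j) = 0 by
    exact h z w
  clear z w
  intro z w
  -- abbreviations
  set B : L := alg.bracket (consTup z0 z) with hB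
  set P : L := alg.bracket (consTup B w) with hP
  set Q : L := alg.bracket (consTup (alg.bracket (consTup z0 w)) z) with hQ
  -- `E` : sorting `[z_i, z_0, z_1, …, ẑ_i, …]` into `[z_0, z_1, …]`
  have hE : ∀ i : Fin (m + 1),
      alg.bracket (consTup (z i) (consTup (n := m + 1) z0 (rmAt z i)))
        = (-1 : ℤ) ^ ((i : ℕ) + 1) • B := by
    intro i
    rw [hB, moveFront_cons alg z0 z i, smul_smul, ← pow_add,
      Even.neg_one_pow ⟨(i : ℕ) + 1, rfl⟩, one_smul]
  -- `D` : sorting `[w_j, z_0, z_1, …, ẑ_i, …]` into `[z_0, w_j, z_1, …, ẑ_i, …]`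
  have hD : ∀ (i j : Fin (m + 1)),
      alg.bracket (consTup (w j) (consTup (n := m + 1) z0 (rmAt z i)))
        = (-1 : ℤ) • alg.bracket (pairCons z0 (w j) z i) := by
    intro i j
    rw [brk_swap, pairCons_eq, neg_one_zsmul]
  -- inner Jacobi identity, for each `i`
  have hBB : ∀ i : Fin (m + 1),
      alg.bracket (consTup (alg.bracket (consTup (z i) w))
          (consTup (n := m + 1) z0 (rmAt z i)))
        = (-1 : ℤ) ^ ((i : ℕ) + 1) • P +
          ∑ j : Fin (m + 1), ((-1 : ℤ) ^ ((j : ℕ) + 1) * (-1 : ℤ)) •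
            alg.bracket (pairCons (alg.bracket (pairCons z0 (w j) z i)) (z i) w j) := by
    intro i
    have hJ := alg.jacobi (consTup (z i) w) (consTup (n := m + 1) z0 (rmAt z i))
    rw [Fin.sum_univ_succ] at hJ
    simp only [consTup_zero, consTup_succ, update_consTup_zero, update_consTup_succ] at hJ
    rw [hE i, brk_smul, ← hP] at hJ
    rw [hJ]
    congr 1
    apply Finset.sum_congr rfl
    intro j _
    rw [hD i j,
      moveFront_cons alg (z i)
        (Function.update w j ((-1 : ℤ) • alg.bracket (pairCons z0 (w j) z i))) j,
      Function.update_self, rmAt_update, brk_smul, ← pairCons_eq, smul_smul]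
  -- outer Jacobi identity
  have hA := alg.jacobi (consTup z0 z) w
  rw [Fin.sum_univ_succ] at hA
  simp only [consTup_zero, consTup_succ, update_consTup_zero, update_consTup_succ] at hA
  rw [← hB, ← hP, ← hQ] at hA
  -- rewrite the summands of the outer identity
  have hupd : ∀ i : Fin (m + 1),
      alg.bracket (consTup z0 (Function.update z i (alg.bracket (consTup (z i) w))))
        = (-1 : ℤ) ^ ((i : ℕ) + 1) •
          alg.bracket (consTup (alg.bracket (consTup (z i) w))
            (consTup (n := m + 1) z0 (rmAt z i))) := by
    intro i
    rw [moveFront_cons alg z0 (Function.update z i (alg.bracket (consTup (z i) w))) i,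
      Function.update_self, rmAt_update]
  have key : P = Q + ((∑ _i : Fin (m + 1), P) +
      ∑ i : Fin (m + 1), ∑ j : Fin (m + 1),
        ((-1 : ℤ) ^ ((i : ℕ) + 1) * (-1 : ℤ) ^ (((j : ℕ) + 1) + 1)) •
          alg.bracket (pairCons (alg.bracket (pairCons z0 (w j) z i)) (z i) w j)) := by
    rw [hA, ← Finset.sum_add_distrib]
    congr 1
    apply Finset.sum_congr rfl
    intro i _
    rw [hupd i, hBB i, smul_add, smul_smul, ← pow_add,
      Even.neg_one_pow ⟨(i : ℕ) + 1, rfl⟩, one_smul, Finset.smul_sum]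
    congr 1
    apply Finset.sum_congr rfl
    intro j _
    rw [smul_smul]
    congr 1
    try ring
  have hsP : (∑ _i : Fin (m + 1), P) = ((m : ℤ) + 1) • P := by
    rw [Finset.sum_const, Finset.card_univ, Fintype.card_fin,
      ← Nat.cast_smul_eq_nsmul ℤ]
    congr 1
    try (push_cast; ring)
  rw [hsP, add_smul, one_smul] at key
  have hcoef : ((((m + 2 : ℕ) : ℤ) - 2 : ℤ) : K) • P = (m : ℤ) • P := by
    rw [Int.cast_smul_eq_zsmul]
    congr 1
    try (push_cast; ring)
  rw [hcoef]
  calc (m : ℤ) • P + Q +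
        ∑ i : Fin (m + 1), ∑ j : Fin (m + 1),
          ((-1 : ℤ) ^ ((i : ℕ) + 1) * (-1 : ℤ) ^ (((j : ℕ) + 1) + 1)) •
            alg.bracket (pairCons (alg.bracket (pairCons z0 (w j) z i)) (z i) w j)
      = (Q + (((m : ℤ) • P + P) +
          ∑ i : Fin (m + 1), ∑ j : Fin (m + 1),
            ((-1 : ℤ) ^ ((i : ℕ) + 1) * (-1 : ℤ) ^ (((j : ℕ) + 1) + 1)) •
              alg.bracket (pairCons (alg.bracket (pairCons z0 (w j) z i)) (z i) w j))) - P := by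
        abel
    _ = P - P := by rw [← key]
    _ = 0 := sub_self P
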